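/- Let G be a finite connected graph with δ-thin triangles and let u,v be a pair of mutually distant vertices of G. Then d_G(u,v) ≥ 2·rad(G) − 2δ − 1. In particular, diam(G) ≥ 2·rad(G) − 2δ − 1. -/

import Mathlib

open SimpleGraph

variable {V : Type*}

/-- Eccentricity of a vertex: the largest distance from `v` to any vertex. -/
noncomputable def ecc [Fintype V] (G : SimpleGraph V) (v : V) : ℕ :=
  Finset.univ.sup fun u => G.dist v u

/-- Radius: the minimum eccentricity. -/
noncomputable def rad [Fintype V] (G : SimpleGraph V) : ℕ :=
  sInf (Set.range (ecc G))

/-- Diameter: the maximum eccentricity. -/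
noncomputable def gdiam [Fintype V] (G : SimpleGraph V) : ℕ :=
  Finset.univ.sup fun v => ecc G v

/-- `G` has δ-thin triangles: for all vertices `x y z`, all geodesics `p1` from `x` to `y`
and `p2` from `x` to `z`, and all vertices `u ∈ p1`, `v ∈ p2` with
`d(x,u) = d(x,v) ≤ (y|z)_x`, one has `d(u,v) ≤ δ`.  The Gromov product condition
`d(x,u) ≤ (y|z)_x = (d(x,y) + d(x,z) - d(y,z))/2` is written additively in `ℕ`. -/
def ThinTriangles (G : SimpleGraph V) (δ : ℝ) : Prop :=
  ∀ (x y z : V) (p1 : G.Walk x y) (p2 : G.Walk x z),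
    p1.length = G.dist x y → p2.length = G.dist x z →
    ∀ u ∈ p1.support, ∀ v ∈ p2.support,
      G.dist x u = G.dist x v →
      2 * G.dist x u + G.dist y z ≤ G.dist x y + G.dist x z →
      (G.dist u v : ℝ) ≤ δ

private lemma split_walk {G : SimpleGraph V} {u v : V} (p : G.Walk u v) :
    ∀ (i : ℕ), i ≤ p.length →
    ∃ q : G.Walk u (p.getVert i), ∃ r : G.Walk (p.getVert i) v,
      q.length = i ∧ r.length = p.length - i := by
  induction p with
  | nil =>
    intro i hi
    simp only [SimpleGraph.Walk.length_nil, Nat.le_zero] at hi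
    subst hi
    exact ⟨Walk.nil, Walk.nil, rfl, rfl⟩
  | cons h p ih =>
    intro i hi
    cases i with
    | zero => exact ⟨Walk.nil, Walk.cons h p, rfl, rfl⟩
    | succ i =>
      obtain ⟨q, r, hq, hr⟩ := ih i (by simpa [Walk.length_cons] using hi)
      exact ⟨q.cons h, r, by simp [hq], by simp [hr, Walk.length_cons]⟩

private lemma dist_getVert {G : SimpleGraph V} (hG : G.Connected) {u v : V}
    (p : G.Walk u v) (hp : p.length = G.dist u v) {i : ℕ} (hi : i ≤ p.length) :
    G.dist u (p.getVert i) = i ∧ G.dist (p.getVert i) v = p.length - i := by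
  obtain ⟨q, r, hq, hr⟩ := split_walk p i hi
  have h1 := G.dist_le q
  have h2 := G.dist_le r
  have h3 := hG.dist_triangle (u := u) (v := p.getVert i) (w := v)
  omega

/-- If `u, v` are mutually distant, then
`d(u,v) ≥ 2 rad(G) - 2δ - 1`; in particular `diam(G) ≥ 2 rad(G) - 2δ - 1`. -/
theorem stmt_2 [Fintype V] (G : SimpleGraph V) (hG : G.Connected)
    (δ : ℝ) (hδ : 0 ≤ δ) (hthin : ThinTriangles G δ)
    (u v : V) (hu : G.dist u v = ecc G u) (hv : G.dist u v = ecc G v) :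
    2 * (rad G : ℝ) - 2 * δ - 1 ≤ (G.dist u v : ℝ) ∧
    2 * (rad G : ℝ) - 2 * δ - 1 ≤ (gdiam G : ℝ) := by
  classical
  have hne : Nonempty V := hG.nonempty
  suffices h : 2 * (rad G : ℝ) - 2 * δ - 1 ≤ (G.dist u v : ℝ) by
    refine ⟨h, h.trans ?_⟩
    have hle : G.dist u v ≤ gdiam G := by
      calc G.dist u v = ecc G u := hu
        _ ≤ gdiam G := Finset.le_sup (Finset.mem_univ u)
    exact_mod_cast hle
  obtain ⟨p, hp⟩ := hG.exists_walk_length_eq_dist u v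
  obtain ⟨t, ht2⟩ : ∃ t, t = G.dist u v / 2 := ⟨_, rfl⟩
  have ht : t ≤ p.length := by omega
  obtain ⟨m, hmem, hdm1, hdm2⟩ :
      ∃ m ∈ p.support, G.dist u m = t ∧ G.dist m v = p.length - t :=
    ⟨p.getVert t, Walk.mem_support_iff_exists_getVert.mpr ⟨t, rfl, ht⟩,
      (dist_getVert hG p hp ht).1, (dist_getVert hG p hp ht).2⟩
  have key : ∀ w, (G.dist m w : ℝ) ≤ δ + ((G.dist u v - t : ℕ) : ℝ) := by
    intro w
    have hduw : G.dist u w ≤ G.dist u v := by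
      have h1 : G.dist u w ≤ ecc G u := Finset.le_sup (Finset.mem_univ w)
      omega
    have hdvw : G.dist v w ≤ G.dist u v := by
      have h1 : G.dist v w ≤ ecc G v := Finset.le_sup (Finset.mem_univ w)
      omega
    have htri : G.dist u v ≤ G.dist u w + G.dist w v := hG.dist_triangle
    have hcomm : G.dist w v = G.dist v w := G.dist_comm
    by_cases hcase : 2 * t + G.dist v w ≤ G.dist u v + G.dist u w
    · obtain ⟨q, hqlen⟩ := hG.exists_walk_length_eq_dist u w
      have htq : t ≤ q.length := by omega
      obtain ⟨m', hmem', hdm'1, hdm'2⟩ :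
          ∃ m' ∈ q.support, G.dist u m' = t ∧ G.dist m' w = q.length - t :=
        ⟨q.getVert t, Walk.mem_support_iff_exists_getVert.mpr ⟨t, rfl, htq⟩,
          (dist_getVert hG q hqlen htq).1, (dist_getVert hG q hqlen htq).2⟩
      have hthin' : (G.dist m m' : ℝ) ≤ δ :=
        hthin u v w p q hp hqlen m hmem m' hmem' (by omega) (by omega)
      have htri2 : G.dist m w ≤ G.dist m m' + G.dist m' w := hG.dist_triangle
      have hnat : G.dist m w ≤ G.dist m m' + (G.dist u v - t) := by omega
      calc (G.dist m w : ℝ)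
          ≤ (G.dist m m' : ℝ) + ((G.dist u v - t : ℕ) : ℝ) := by exact_mod_cast hnat
        _ ≤ δ + ((G.dist u v - t : ℕ) : ℝ) := by linarith
    · obtain ⟨s, hs⟩ : ∃ s, s = p.length - t := ⟨_, rfl⟩
      have hdvu : G.dist v u = G.dist u v := G.dist_comm
      have hplen : p.reverse.length = G.dist v u := by
        rw [Walk.length_reverse, hp, hdvu]
      have hmemr : m ∈ p.reverse.support := by
        rw [Walk.support_reverse, List.mem_reverse]; exact hmem
      obtain ⟨q, hqlen⟩ := hG.exists_walk_length_eq_dist v w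
      have hsq : s ≤ q.length := by omega
      obtain ⟨m', hmem', hdm'1, hdm'2⟩ :
          ∃ m' ∈ q.support, G.dist v m' = s ∧ G.dist m' w = q.length - s :=
        ⟨q.getVert s, Walk.mem_support_iff_exists_getVert.mpr ⟨s, rfl, hsq⟩,
          (dist_getVert hG q hqlen hsq).1, (dist_getVert hG q hqlen hsq).2⟩
      have hdvm : G.dist v m = s := by rw [G.dist_comm]; omega
      have hthin' : (G.dist m m' : ℝ) ≤ δ :=
        hthin v u w p.reverse q hplen hqlen m hmemr m' hmem' (by omega) (by omega)
      have htri2 : G.dist m w ≤ G.dist m m' + G.dist m' w := hG.dist_triangle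
      have hnat : G.dist m w ≤ G.dist m m' + (G.dist u v - t) := by omega
      calc (G.dist m w : ℝ)
          ≤ (G.dist m m' : ℝ) + ((G.dist u v - t : ℕ) : ℝ) := by exact_mod_cast hnat
        _ ≤ δ + ((G.dist u v - t : ℕ) : ℝ) := by linarith
  have hrad : rad G ≤ ecc G m := Nat.sInf_le ⟨m, rfl⟩
  obtain ⟨w₀, _, hw₀⟩ :=
    Finset.exists_mem_eq_sup (Finset.univ : Finset V) Finset.univ_nonempty
      (fun w => G.dist m w)
  have hecc : (ecc G m : ℝ) ≤ δ + ((G.dist u v - t : ℕ) : ℝ) := by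
    rw [show ecc G m = G.dist m w₀ from hw₀]
    exact key w₀
  have hradR : (rad G : ℝ) ≤ δ + ((G.dist u v - t : ℕ) : ℝ) :=
    le_trans (by exact_mod_cast hrad) hecc
  have hnat2 : 2 * (G.dist u v - t) ≤ G.dist u v + 1 := by omega
  have hcast : 2 * ((G.dist u v - t : ℕ) : ℝ) ≤ (G.dist u v : ℝ) + 1 := by
    exact_mod_cast hnat2
  linarith
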